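/- Let d ≥ 3 and t ∈ [0,1]. Let p = [t, 1−t, 0, …, 0] be a vector of size d, let B be a d×d bracelet bistochastic matrix, and let e_k be the k-th standard unit vector for any k ≥ 3. Then the vectors Bp and Be_k satisfy the bracelet condition. -/

import Mathlib

/-- A `d × d` real matrix is bistochastic (doubly stochastic) if all its entries are
non-negative and each row and each column sums to `1`. -/
def Bistochastic {d : ℕ} (B : Matrix (Fin d) (Fin d) ℝ) : Prop :=
  (∀ j k, 0 ≤ B j k) ∧ (∀ j, ∑ k, B j k = 1) ∧ (∀ k, ∑ j, B j k = 1)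

/-- A bistochastic matrix is bracelet if for every pair of columns `k, l` and every `j₀`,
`2 √(B j₀ k * B j₀ l) ≤ ∑ j, √(B j k * B j l)` (equivalently, twice the maximum is at most
the sum), and the analogous condition holds for every pair of rows. -/
def Bracelet {d : ℕ} (B : Matrix (Fin d) (Fin d) ℝ) : Prop :=
  Bistochastic B ∧
  (∀ k l j₀ : Fin d, 2 * Real.sqrt (B j₀ k * B j₀ l) ≤ ∑ j, Real.sqrt (B j k * B j l)) ∧
  (∀ j k l₀ : Fin d, 2 * Real.sqrt (B j l₀ * B k l₀) ≤ ∑ l, Real.sqrt (B j l * B k l))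

/-- Two vectors `p, q` satisfy the bracelet condition if for every `k`,
`√(p k * q k) ≤ ∑_{j ≠ k} √(p j * q j)`. -/
def VecBracelet {d : ℕ} (p q : Fin d → ℝ) : Prop :=
  ∀ k, Real.sqrt (p k * q k) ≤ ∑ j ∈ Finset.univ.erase k, Real.sqrt (p j * q j)

/-- For `t ∈ [0,1]`, `p = [t, 1-t, 0, …, 0]`, a bracelet bistochastic matrix `B`, and the
`k`-th standard unit vector with `k ≥ 3` (zero-based: `(k : ℕ) ≥ 2`), the vectors `B p` and
`B e_k` satisfy the bracelet condition. -/


lemma sqrt_sum_sq_le {ι : Type*} (s : Finset ι) (a b : ι → ℝ) :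
    Real.sqrt ((∑ j ∈ s, a j)^2 + (∑ j ∈ s, b j)^2) ≤ ∑ j ∈ s, Real.sqrt (a j^2 + b j^2) := by
  have h : ∀ x y : ℝ, Real.sqrt (x^2+y^2) = ‖(x:ℂ) + y * Complex.I‖ := by
    intro x y; rw [Complex.norm_add_mul_I]
  calc Real.sqrt ((∑ j ∈ s, a j)^2 + (∑ j ∈ s, b j)^2)
      = ‖∑ j ∈ s, ((a j : ℂ) + (b j : ℂ) * Complex.I)‖ := by
        rw [h]; congr 1
        rw [Finset.sum_add_distrib, ← Finset.sum_mul]; push_cast; ring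
    _ ≤ ∑ j ∈ s, ‖(a j : ℂ) + (b j : ℂ) * Complex.I‖ :=
        norm_sum_le _ _
    _ = ∑ j ∈ s, Real.sqrt (a j^2 + b j^2) := by
        refine Finset.sum_congr rfl fun j _ => ?_; rw [h]

theorem bracelet_mulVec_p_unit {d : ℕ} (hd : 3 ≤ d) (t : ℝ) (ht : t ∈ Set.Icc (0 : ℝ) 1)
    (B : Matrix (Fin d) (Fin d) ℝ) (hB : Bracelet B) (k : Fin d) (hk : 2 ≤ (k : ℕ)) :
    VecBracelet
      (B.mulVec fun j => if (j : ℕ) = 0 then t else if (j : ℕ) = 1 then 1 - t else 0)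
      (B.mulVec (Pi.single k 1)) := by
  obtain ⟨⟨hBnn, _, _⟩, hcols, _⟩ := hB
  obtain ⟨ht0, ht1⟩ := ht
  have ht1' : (0:ℝ) ≤ 1 - t := by linarith
  set i0 : Fin d := ⟨0, by omega⟩ with hi0
  set i1 : Fin d := ⟨1, by omega⟩ with hi1
  intro m
  set a : Fin d → ℝ := fun j => Real.sqrt t * Real.sqrt (B j i0 * B j k) with ha
  set b : Fin d → ℝ := fun j => Real.sqrt (1-t) * Real.sqrt (B j i1 * B j k) with hb
  have hq : ∀ j, B.mulVec (Pi.single k 1) j = B j k := by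
    intro j; simp [Matrix.mulVec_single]
  have hp : ∀ j, (B.mulVec fun l => if (l : ℕ) = 0 then t else if (l : ℕ) = 1 then 1 - t else 0) j
      = t * B j i0 + (1 - t) * B j i1 := by
    intro j
    simp only [Matrix.mulVec, dotProduct]
    rw [Fintype.sum_eq_add i0 i1 (by simp [hi0, hi1, Fin.ext_iff])
      (fun x ⟨hx0, hx1⟩ => by
        have h0 : (x:ℕ) ≠ 0 := fun h => hx0 (Fin.ext (by simpa using h))
        have h1 : (x:ℕ) ≠ 1 := fun h => hx1 (Fin.ext (by simpa using h))
        simp [h0, h1])]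
    simp [hi0, hi1]; ring
  have key : ∀ j, (B.mulVec fun l => if (l : ℕ) = 0 then t else if (l : ℕ) = 1 then 1 - t else 0) j
      * B.mulVec (Pi.single k 1) j = a j ^ 2 + b j ^ 2 := by
    intro j
    rw [hp, hq, ha, hb]
    simp only [mul_pow, Real.sq_sqrt ht0, Real.sq_sqrt ht1',
      Real.sq_sqrt (mul_nonneg (hBnn j i0) (hBnn j k)),
      Real.sq_sqrt (mul_nonneg (hBnn j i1) (hBnn j k))]
    ring
  -- bracelet bounds
  have hmem : m ∈ Finset.univ := Finset.mem_univ m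
  have habd : a m ≤ ∑ j ∈ Finset.univ.erase m, a j := by
    have h := hcols i0 k m
    have h2 : Real.sqrt (B m i0 * B m k) ≤ ∑ j ∈ Finset.univ.erase m, Real.sqrt (B j i0 * B j k) := by
      rw [← Finset.sum_erase_add Finset.univ _ hmem] at h; linarith
    rw [ha]; simp only [← Finset.mul_sum]
    exact mul_le_mul_of_nonneg_left h2 (Real.sqrt_nonneg t)
  have hbbd : b m ≤ ∑ j ∈ Finset.univ.erase m, b j := by
    have h := hcols i1 k m
    have h2 : Real.sqrt (B m i1 * B m k) ≤ ∑ j ∈ Finset.univ.erase m, Real.sqrt (B j i1 * B j k) := by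
      rw [← Finset.sum_erase_add Finset.univ _ hmem] at h; linarith
    rw [hb]; simp only [← Finset.mul_sum]
    exact mul_le_mul_of_nonneg_left h2 (Real.sqrt_nonneg _)
  have hanng : 0 ≤ a m := mul_nonneg (Real.sqrt_nonneg _) (Real.sqrt_nonneg _)
  have hbnng : 0 ≤ b m := mul_nonneg (Real.sqrt_nonneg _) (Real.sqrt_nonneg _)
  calc Real.sqrt _ = Real.sqrt (a m ^ 2 + b m ^ 2) := by rw [key]
    _ ≤ Real.sqrt ((∑ j ∈ Finset.univ.erase m, a j)^2 + (∑ j ∈ Finset.univ.erase m, b j)^2) := by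
        apply Real.sqrt_le_sqrt
        gcongr
    _ ≤ ∑ j ∈ Finset.univ.erase m, Real.sqrt (a j ^ 2 + b j ^ 2) := sqrt_sum_sq_le _ _ _
    _ = ∑ j ∈ Finset.univ.erase m, Real.sqrt _ := by
        refine Finset.sum_congr rfl fun j _ => ?_; rw [key]
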